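/- Let F be the cellular automaton over ZMod 4 with diameter d = 2 and local rule f(a,b,c) = a² + b + c² (mod 4). Then the global map F is surjective, F is not permutive at position 1 (not left-permutive), and F is not permutive at position 3 (not right-permutive). -/
import Mathlib

/-- The global map of the cellular automaton over `ZMod m` with diameter `d`
and local rule `f : (ZMod m)^{d+1} → ZMod m`:
`F(x)_i = f(x_i, x_{i+1}, …, x_{i+d})`. -/
def globalMap (m d : ℕ) (f : (Fin (d + 1) → ZMod m) → ZMod m)
    (x : ℤ → ZMod m) : ℤ → ZMod m :=
  fun i => f fun k => x (i + ((k : ℕ) : ℤ))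

/-- The CA with local rule `f` is permutive at position `j` if, for every
choice of fixed values of the other `d` coordinates, the one-variable map
`a ↦ f(x_1,…,x_{j-1}, a, x_{j+1},…,x_{d+1})` is a bijection of `ZMod m`. -/
def PermutiveAt (m d : ℕ) (f : (Fin (d + 1) → ZMod m) → ZMod m)
    (j : Fin (d + 1)) : Prop :=
  ∀ x : Fin (d + 1) → ZMod m,
    Function.Bijective fun a : ZMod m => f (Function.update x j a)

/-- second-order recurrence over `ZMod 2` -/
def seqF (a b : ZMod 2) (Y : ℕ → ZMod 2) : ℕ → ZMod 2
  | 0 => a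
  | 1 => b
  | n + 2 => seqF a b Y (n + 1) + seqF a b Y n + Y n

/-- two-sided parity sequence -/
def pZ (Y : ℤ → ZMod 2) : ℤ → ZMod 2
  | Int.ofNat n => seqF 0 (Y (-1)) (fun k => Y k) n
  | Int.negSucc n => seqF 0 0 (fun k => Y (-(k + 2))) (n + 1)

lemma pZ_rec (Y : ℤ → ZMod 2) (i : ℤ) :
    pZ Y (i + 2) = pZ Y (i + 1) + pZ Y i + Y i := by
  have char2 : ∀ a : ZMod 2, a + a = 0 := by decide
  cases i with
  | ofNat n =>
    have h1 : (Int.ofNat n) + 1 = Int.ofNat (n + 1) := by simp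
    have h2 : (Int.ofNat n) + 2 = Int.ofNat (n + 2) := by
      simp [Int.ofNat_eq_natCast]
    rw [h1, h2]
    show seqF 0 (Y (-1)) (fun k => (Y k)) (n + 2) = _
    rw [seqF]
    rfl
  | negSucc n =>
    match n with
    | 0 =>
      show pZ Y 1 = pZ Y 0 + pZ Y (Int.negSucc 0) + Y (-1)
      simp only [pZ]
      show seqF 0 (Y (-1)) _ 1 = seqF 0 (Y (-1)) _ 0 + seqF 0 0 _ 1 + Y (-1)
      simp [seqF]
    | 1 =>
      show pZ Y 0 = pZ Y (Int.negSucc 0) + pZ Y (Int.negSucc 1) + Y (-2)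
      simp only [pZ]
      show seqF 0 (Y (-1)) _ 0 = seqF 0 0 _ 1 + seqF 0 0 _ 2 + Y (-2)
      simp [seqF, char2]
    | Nat.succ (Nat.succ m) =>
      have e2 : (Int.negSucc (m + 2)) + 2 = Int.negSucc m := by
        simp [Int.negSucc_eq]; ring
      have e1 : (Int.negSucc (m + 2)) + 1 = Int.negSucc (m + 1) := by
        simp [Int.negSucc_eq]; ring
      rw [e1, e2]
      show seqF 0 0 (fun k => Y (-(k + 2))) (m + 1) =
        seqF 0 0 (fun k => Y (-(k + 2))) (m + 2) +
          seqF 0 0 (fun k => Y (-(k + 2))) (m + 3) + Y (Int.negSucc (m + 2))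
      have hunf : seqF 0 0 (fun k => Y (-(k + 2))) (m + 3) =
          seqF 0 0 (fun k => Y (-(k + 2))) (m + 2) +
            seqF 0 0 (fun k => Y (-(k + 2))) (m + 1) +
            Y (-((((m + 1 : ℕ)) : ℤ) + 2)) := rfl
      rw [hunf]
      have hY : Y (Int.negSucc (m + 2)) = Y (-((((m + 1 : ℕ)) : ℤ) + 2)) := by
        congr 1
      rw [hY]
      generalize seqF 0 0 (fun k => Y (-(k + 2))) (m + 1) = A
      generalize seqF 0 0 (fun k => Y (-(k + 2))) (m + 2) = B
      generalize Y (-((((m + 1 : ℕ)) : ℤ) + 2)) = C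
      have : ∀ a b c : ZMod 2, a = b + (b + a + c) + c := by decide
      exact this A B C

/-- lift parity to ZMod 4 -/
def cc (a : ZMod 2) : ZMod 4 := (a.val : ZMod 4)

/-- reduce ZMod 4 to parity -/
def PP (a : ZMod 4) : ZMod 2 := (a.val : ZMod 2)

lemma sq_eq_cc_PP (a : ZMod 4) : a ^ 2 = cc (PP a) := by revert a; decide
lemma PP_cc (a : ZMod 2) : PP (cc a) = a := by revert a; decide
lemma PP_addsub (a b c : ZMod 4) : PP (a - b - c) = PP a + PP b + PP c := by revert a b c; decide

theorem zmod4_a2_b_c2_surjective_not_permutive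
    (f : (Fin 3 → ZMod 4) → ZMod 4)
    (hf : ∀ x, f x = x 0 ^ 2 + x 1 + x 2 ^ 2) :
    Function.Surjective (globalMap 4 2 f) ∧
      ¬ PermutiveAt 4 2 f 0 ∧ ¬ PermutiveAt 4 2 f 2 := by
  refine ⟨?_, ?_, ?_⟩
  · intro y
    set Y : ℤ → ZMod 2 := fun i => PP (y i) with hY
    set p : ℤ → ZMod 2 := pZ Y with hp
    refine ⟨fun i => y (i - 1) - cc (p (i - 1)) - cc (p (i + 1)), ?_⟩
    set x : ℤ → ZMod 4 := fun i => y (i - 1) - cc (p (i - 1)) - cc (p (i + 1)) with hx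
    have hPx : ∀ i : ℤ, PP (x i) = p i := by
      intro i
      have hr := pZ_rec Y (i - 1)
      rw [show i - 1 + 2 = i + 1 by ring, show i - 1 + 1 = i by ring, ← hp] at hr
      show PP (y (i - 1) - cc (p (i - 1)) - cc (p (i + 1))) = p i
      rw [PP_addsub, PP_cc, PP_cc, show PP (y (i - 1)) = Y (i - 1) from rfl, hr]
      generalize p i = A
      generalize p (i-1) = B
      generalize Y (i-1) = C
      have : ∀ a b c : ZMod 2, c + b + (a + b + c) = a := by decide
      exact this A B C
    funext i
    show f (fun k => x (i + ((k : ℕ) : ℤ))) = y i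
    rw [hf]
    have e0 : i + ((((0 : Fin 3) : ℕ)) : ℤ) = i := by simp
    have e1 : i + ((((1 : Fin 3) : ℕ)) : ℤ) = i + 1 := by rfl
    have e2 : i + ((((2 : Fin 3) : ℕ)) : ℤ) = i + 2 := by rfl
    rw [e0, e1, e2, sq_eq_cc_PP (x i), sq_eq_cc_PP (x (i + 2)), hPx, hPx]
    have hx1 : x (i + 1) = y i - cc (p i) - cc (p (i + 2)) := by
      show y (i + 1 - 1) - cc (p (i + 1 - 1)) - cc (p (i + 1 + 1)) = _
      rw [show i + 1 - 1 = i by ring, show i + 1 + 1 = i + 2 by ring]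
    rw [hx1]; ring
  · intro h
    have hb := h (fun _ => 0)
    have : (fun a : ZMod 4 => f (Function.update (fun _ => 0) 0 a)) =
        fun a : ZMod 4 => a ^ 2 + 0 + 0 ^ 2 := by
      funext a
      rw [hf]
      simp [Function.update]
    rw [this] at hb
    have : ¬ Function.Bijective (fun a : ZMod 4 => a ^ 2 + 0 + 0 ^ 2) := by decide
    exact this hb
  · intro h
    have hb := h (fun _ => 0)
    have : (fun a : ZMod 4 => f (Function.update (fun _ => 0) 2 a)) =
        fun a : ZMod 4 => (0:ZMod 4) ^ 2 + 0 + a ^ 2 := by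
      funext a
      rw [hf]
      simp [Function.update]
    rw [this] at hb
    have : ¬ Function.Bijective (fun a : ZMod 4 => (0:ZMod 4) ^ 2 + 0 + a ^ 2) := by decide
    exact this hb
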